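/- For all α, β ∈ ℝ the following generalized adding-angle formulas hold for the 3-hyperbolic functions: cosh₃(α+β) = cosh₃(α)cosh₃(β) + sinh₃₁(α)sinh₃₂(β) + sinh₃₂(α)sinh₃₁(β); sinh₃₁(α+β) = sinh₃₁(α)cosh₃(β) + cosh₃(α)sinh₃₁(β) + sinh₃₂(α)sinh₃₂(β); sinh₃₂(α+β) = sinh₃₂(α)cosh₃(β) + cosh₃(α)sinh₃₂(β) + sinh₃₁(α)sinh₃₁(β); where cosh₃(x) = ∑_{m≥0} x^{3m}/(3m)!, sinh₃₁(x) = ∑_{m≥0} x^{3m+1}/(3m+1)!, sinh₃₂(x) = ∑_{m≥0} x^{3m+2}/(3m+2)!. -/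

import Mathlib

/-- `cosh₃ x = ∑_{m≥0} x^{3m}/(3m)!`. -/
noncomputable def cosh₃ (x : ℝ) : ℝ := ∑' m : ℕ, x ^ (3 * m) / (Nat.factorial (3 * m) : ℝ)

/-- `sinh₃₁ x = ∑_{m≥0} x^{3m+1}/(3m+1)!`. -/
noncomputable def sinh₃₁ (x : ℝ) : ℝ :=
  ∑' m : ℕ, x ^ (3 * m + 1) / (Nat.factorial (3 * m + 1) : ℝ)

/-- `sinh₃₂ x = ∑_{m≥0} x^{3m+2}/(3m+2)!`. -/
noncomputable def sinh₃₂ (x : ℝ) : ℝ :=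
  ∑' m : ℕ, x ^ (3 * m + 2) / (Nat.factorial (3 * m + 2) : ℝ)

open Complex in
/-- A primitive cube root of unity. -/
noncomputable def ω₃ : ℂ := (-1 + Real.sqrt 3 * Complex.I) / 2

lemma ω₃_prop : ω₃ ^ 2 + ω₃ + 1 = 0 := by
  have hs : ((Real.sqrt 3 : ℝ) : ℂ) ^ 2 = 3 := by
    norm_cast
    rw [Real.sq_sqrt] <;> norm_num
  unfold ω₃
  linear_combination ((Real.sqrt 3 : ℝ) : ℂ) ^ 2 / 4 * Complex.I_sq - (1 / 4 : ℂ) * hs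

lemma ω₃_cube : ω₃ ^ 3 = 1 := by
  linear_combination (ω₃ - 1) * ω₃_prop

/-- Reindexing a series supported on `3ℕ + r`. -/
lemma tsum_three_shift (r : ℕ) (hr : r < 3) (f : ℕ → ℂ) (hf : ∀ n, n % 3 ≠ r → f n = 0) :
    ∑' n : ℕ, f n = ∑' m : ℕ, f (3 * m + r) := by
  refine (Function.Injective.tsum_eq (g := fun m : ℕ => 3 * m + r) ?_ ?_).symm
  · intro a b h
    simp only at h
    omega
  · intro n hn
    have h1 : n % 3 = r := by
      by_contra h
      exact hn (hf n h)
    exact ⟨n / 3, by simp only; omega⟩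

lemma exp_combo (c₁ c₂ : ℂ) (r : ℕ) (hr : r < 3)
    (hco : ∀ k, k < 3 → 1 + c₁ * ω₃ ^ k + c₂ * ω₃ ^ (2 * k) = if k = r then 3 else 0)
    (x : ℂ) :
    Complex.exp x + c₁ * Complex.exp (ω₃ * x) + c₂ * Complex.exp (ω₃ ^ 2 * x) =
      3 * ∑' m : ℕ, x ^ (3 * m + r) / (Nat.factorial (3 * m + r) : ℂ) := by
  have hsum : ∀ c : ℂ, Summable fun n : ℕ => c ^ n * (x ^ n / (Nat.factorial n : ℂ)) := by
    intro c
    have := NormedSpace.expSeries_div_summable (c * x)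
    refine this.congr fun n => ?_
    rw [mul_pow]; ring
  have hexp : ∀ c : ℂ, Complex.exp (c * x) = ∑' n : ℕ, c ^ n * (x ^ n / (Nat.factorial n : ℂ)) := by
    intro c
    rw [Complex.exp_eq_exp_ℂ, NormedSpace.exp_eq_tsum_div]
    exact tsum_congr fun n => by rw [mul_pow]; ring
  have h1 : Complex.exp x = ∑' n : ℕ, (1 : ℂ) ^ n * (x ^ n / (Nat.factorial n : ℂ)) := by
    simpa using hexp 1
  have h2 : Complex.exp (ω₃ * x) = ∑' n : ℕ, ω₃ ^ n * (x ^ n / (Nat.factorial n : ℂ)) := hexp ω₃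
  have h3 : Complex.exp (ω₃ ^ 2 * x) =
      ∑' n : ℕ, (ω₃ ^ 2) ^ n * (x ^ n / (Nat.factorial n : ℂ)) := hexp (ω₃ ^ 2)
  rw [h1, h2, h3, ← tsum_mul_left (a := c₁), ← tsum_mul_left (a := c₂),
    ← Summable.tsum_add (hsum 1) ((hsum ω₃).mul_left c₁),
    ← Summable.tsum_add ((hsum 1).add ((hsum ω₃).mul_left c₁)) ((hsum (ω₃ ^ 2)).mul_left c₂)]
  have key : ∀ n : ℕ, (1 : ℂ) ^ n * (x ^ n / (Nat.factorial n : ℂ)) +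
      c₁ * (ω₃ ^ n * (x ^ n / (Nat.factorial n : ℂ))) +
      c₂ * ((ω₃ ^ 2) ^ n * (x ^ n / (Nat.factorial n : ℂ))) =
      (if n % 3 = r then (3 : ℂ) else 0) * (x ^ n / (Nat.factorial n : ℂ)) := by
    intro n
    have hn : ω₃ ^ n = ω₃ ^ (n % 3) := by
      conv_lhs => rw [show n = 3 * (n / 3) + n % 3 by omega]
      rw [pow_add, pow_mul, ω₃_cube, one_pow, one_mul]
    have hn2 : (ω₃ ^ 2) ^ n = ω₃ ^ (2 * (n % 3)) := by
      calc (ω₃ ^ 2) ^ n = (ω₃ ^ n) ^ 2 := by rw [← pow_mul, ← pow_mul, mul_comm]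
        _ = ω₃ ^ (2 * (n % 3)) := by rw [hn, ← pow_mul, mul_comm]
    rw [one_pow, hn, hn2]
    have := hco (n % 3) (by omega)
    have hiff : (n % 3 = r) = (n % 3 = r) := rfl
    calc (1 : ℂ) * (x ^ n / (Nat.factorial n : ℂ)) + c₁ * (ω₃ ^ (n % 3) * (x ^ n / (Nat.factorial n : ℂ))) +
          c₂ * (ω₃ ^ (2 * (n % 3)) * (x ^ n / (Nat.factorial n : ℂ)))
        = (1 + c₁ * ω₃ ^ (n % 3) + c₂ * ω₃ ^ (2 * (n % 3))) * (x ^ n / (Nat.factorial n : ℂ)) := by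
          ring
      _ = (if n % 3 = r then (3 : ℂ) else 0) * (x ^ n / (Nat.factorial n : ℂ)) := by rw [this]
  rw [tsum_congr key]
  rw [tsum_three_shift r hr _ (fun n hn => by simp [hn])]
  rw [← tsum_mul_left]
  refine tsum_congr fun m => ?_
  rw [if_pos (by omega)]

lemma cosh₃_complex (x : ℝ) :
    (cosh₃ x : ℂ) * 3 = Complex.exp x + Complex.exp (ω₃ * x) + Complex.exp (ω₃ ^ 2 * x) := by
  have h := exp_combo 1 1 0 (by norm_num) ?_ (x : ℂ)
  · rw [cosh₃, Complex.ofReal_tsum]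
    push_cast
    simp only [Nat.add_zero] at h
    linear_combination -h
  · intro k hk
    interval_cases k
    · norm_num
    · norm_num
      linear_combination ω₃_prop
    · norm_num
      linear_combination (ω₃ ^ 2 - ω₃ + 1) * ω₃_prop
lemma sinh₃₁_complex (x : ℝ) :
    (sinh₃₁ x : ℂ) * 3 = Complex.exp x + ω₃ ^ 2 * Complex.exp (ω₃ * x) + ω₃ * Complex.exp (ω₃ ^ 2 * x) := by
  have h := exp_combo (ω₃ ^ 2) ω₃ 1 (by norm_num) ?_ (x : ℂ)
  · rw [sinh₃₁, Complex.ofReal_tsum]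
    push_cast
    linear_combination -h
  · intro k hk
    interval_cases k
    · norm_num
      linear_combination ω₃_prop
    · norm_num
      linear_combination (2 * ω₃ - 2) * ω₃_prop
    · norm_num
      linear_combination (ω₃ ^ 3 - ω₃ + 1) * ω₃_prop

lemma sinh₃₂_complex (x : ℝ) :
    (sinh₃₂ x : ℂ) * 3 = Complex.exp x + ω₃ * Complex.exp (ω₃ * x) + ω₃ ^ 2 * Complex.exp (ω₃ ^ 2 * x) := by
  have h := exp_combo ω₃ (ω₃ ^ 2) 2 (by norm_num) ?_ (x : ℂ)
  · rw [sinh₃₂, Complex.ofReal_tsum]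
    push_cast
    linear_combination -h
  · intro k hk
    interval_cases k
    · norm_num
      linear_combination ω₃_prop
    · norm_num
      linear_combination (ω₃ ^ 2 - ω₃ + 1) * ω₃_prop
    · norm_num
      linear_combination (ω₃ ^ 4 - ω₃ ^ 3 + 2 * ω₃ - 2) * ω₃_prop

/-- **Generalized adding-angle formulas for the 3-hyperbolic functions**, obtained by
equating components in `e^{j(α+β)} = e^{jα}·e^{jβ}` in `ℋ₃ = ℝ[j]/⟨j³ − 1⟩`. -/
theorem adding_angle_H₃ (α β : ℝ) :
    cosh₃ (α + β) =
        cosh₃ α * cosh₃ β + sinh₃₁ α * sinh₃₂ β + sinh₃₂ α * sinh₃₁ β ∧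
    sinh₃₁ (α + β) =
        sinh₃₁ α * cosh₃ β + cosh₃ α * sinh₃₁ β + sinh₃₂ α * sinh₃₂ β ∧
    sinh₃₂ (α + β) =
        sinh₃₂ α * cosh₃ β + cosh₃ α * sinh₃₂ β + sinh₃₁ α * sinh₃₁ β := by
  have hE0 : (Complex.exp (↑(α + β)) : ℂ) = Complex.exp α * Complex.exp β := by
    push_cast; rw [Complex.exp_add]
  have hE1 : (Complex.exp (ω₃ * ↑(α + β)) : ℂ) =
      Complex.exp (ω₃ * α) * Complex.exp (ω₃ * β) := by
    push_cast; rw [mul_add, Complex.exp_add]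
  have hE2 : (Complex.exp (ω₃ ^ 2 * ↑(α + β)) : ℂ) =
      Complex.exp (ω₃ ^ 2 * α) * Complex.exp (ω₃ ^ 2 * β) := by
    push_cast; rw [mul_add, Complex.exp_add]
  have hca : ((cosh₃ α : ℝ) : ℂ) = (Complex.exp α + Complex.exp (ω₃ * α) + Complex.exp (ω₃ ^ 2 * α)) / 3 := by
    linear_combination (cosh₃_complex α) / 3
  have hcb : ((cosh₃ β : ℝ) : ℂ) = (Complex.exp β + Complex.exp (ω₃ * β) + Complex.exp (ω₃ ^ 2 * β)) / 3 := by
    linear_combination (cosh₃_complex β) / 3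
  have hcs : ((cosh₃ (α + β) : ℝ) : ℂ) = (Complex.exp α * Complex.exp β + Complex.exp (ω₃ * α) * Complex.exp (ω₃ * β) + Complex.exp (ω₃ ^ 2 * α) * Complex.exp (ω₃ ^ 2 * β)) / 3 := by
    have := cosh₃_complex (α + β)
    rw [hE0, hE1, hE2] at this
    linear_combination this / 3
  have h1a : ((sinh₃₁ α : ℝ) : ℂ) = (Complex.exp α + ω₃ ^ 2 * Complex.exp (ω₃ * α) + ω₃ * Complex.exp (ω₃ ^ 2 * α)) / 3 := by
    linear_combination (sinh₃₁_complex α) / 3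
  have h1b : ((sinh₃₁ β : ℝ) : ℂ) = (Complex.exp β + ω₃ ^ 2 * Complex.exp (ω₃ * β) + ω₃ * Complex.exp (ω₃ ^ 2 * β)) / 3 := by
    linear_combination (sinh₃₁_complex β) / 3
  have h1s : ((sinh₃₁ (α + β) : ℝ) : ℂ) = (Complex.exp α * Complex.exp β + ω₃ ^ 2 * (Complex.exp (ω₃ * α) * Complex.exp (ω₃ * β)) + ω₃ * (Complex.exp (ω₃ ^ 2 * α) * Complex.exp (ω₃ ^ 2 * β))) / 3 := by
    have := sinh₃₁_complex (α + β)
    rw [hE0, hE1, hE2] at this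
    linear_combination this / 3
  have h2a : ((sinh₃₂ α : ℝ) : ℂ) = (Complex.exp α + ω₃ * Complex.exp (ω₃ * α) + ω₃ ^ 2 * Complex.exp (ω₃ ^ 2 * α)) / 3 := by
    linear_combination (sinh₃₂_complex α) / 3
  have h2b : ((sinh₃₂ β : ℝ) : ℂ) = (Complex.exp β + ω₃ * Complex.exp (ω₃ * β) + ω₃ ^ 2 * Complex.exp (ω₃ ^ 2 * β)) / 3 := by
    linear_combination (sinh₃₂_complex β) / 3
  have h2s : ((sinh₃₂ (α + β) : ℝ) : ℂ) = (Complex.exp α * Complex.exp β + ω₃ * (Complex.exp (ω₃ * α) * Complex.exp (ω₃ * β)) + ω₃ ^ 2 * (Complex.exp (ω₃ ^ 2 * α) * Complex.exp (ω₃ ^ 2 * β))) / 3 := by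
    have := sinh₃₂_complex (α + β)
    rw [hE0, hE1, hE2] at this
    linear_combination this / 3
  set A := Complex.exp (α : ℂ)
  set B := Complex.exp (ω₃ * (α : ℂ))
  set C := Complex.exp (ω₃ ^ 2 * (α : ℂ))
  set D := Complex.exp (β : ℂ)
  set E := Complex.exp (ω₃ * (β : ℂ))
  set F := Complex.exp (ω₃ ^ 2 * (β : ℂ))
  refine ⟨?_, ?_, ?_⟩
  · have key : ((cosh₃ (α + β) : ℝ) : ℂ) =
        ((cosh₃ α * cosh₃ β + sinh₃₁ α * sinh₃₂ β + sinh₃₂ α * sinh₃₁ β : ℝ) : ℂ) := by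
      push_cast
      rw [hcs, hca, hcb, h1a, h2b, h2a, h1b]
      linear_combination ((2/9 : ℂ)*C*F + (-2/9 : ℂ)*C*F*ω₃ + (-1/9 : ℂ)*C*E + (1/9 : ℂ)*C*E*ω₃
        + (-1/9 : ℂ)*C*E*ω₃^2 + (-1/9 : ℂ)*C*D + (-1/9 : ℂ)*B*F + (1/9 : ℂ)*B*F*ω₃
        + (-1/9 : ℂ)*B*F*ω₃^2 + (2/9 : ℂ)*B*E + (-2/9 : ℂ)*B*E*ω₃ + (-1/9 : ℂ)*B*D
        + (-1/9 : ℂ)*A*F + (-1/9 : ℂ)*A*E) * ω₃_prop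
    exact_mod_cast key
  · have key : ((sinh₃₁ (α + β) : ℝ) : ℂ) =
        ((sinh₃₁ α * cosh₃ β + cosh₃ α * sinh₃₁ β + sinh₃₂ α * sinh₃₂ β : ℝ) : ℂ) := by
      push_cast
      rw [h1s, h1a, hcb, hca, h1b, h2a, h2b]
      linear_combination ((1/9 : ℂ)*C*F*ω₃ + (-1/9 : ℂ)*C*F*ω₃^2 + (-1/9 : ℂ)*C*E*ω₃
        + (-1/9 : ℂ)*C*D + (-1/9 : ℂ)*B*F*ω₃ + (-1/9 : ℂ)*B*D + (-1/9 : ℂ)*A*F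
        + (-1/9 : ℂ)*A*E) * ω₃_prop
    exact_mod_cast key
  · have key : ((sinh₃₂ (α + β) : ℝ) : ℂ) =
        ((sinh₃₂ α * cosh₃ β + cosh₃ α * sinh₃₂ β + sinh₃₁ α * sinh₃₁ β : ℝ) : ℂ) := by
      push_cast
      rw [h2s, h2a, hcb, hca, h2b, h1a, h1b]
      linear_combination ((-1/9 : ℂ)*C*E*ω₃ + (-1/9 : ℂ)*C*D + (-1/9 : ℂ)*B*F*ω₃
        + (1/9 : ℂ)*B*E*ω₃ + (-1/9 : ℂ)*B*E*ω₃^2 + (-1/9 : ℂ)*B*D + (-1/9 : ℂ)*A*F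
        + (-1/9 : ℂ)*A*E) * ω₃_prop
    exact_mod_cast key
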